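/- Let N = 2 and F = 1/√2, and let ρ_F be the corresponding density matrix on ℂ² ⊗ ℂ². Then ρ_F ⊗ ρ_F, regarded as a density matrix on ℂ⁴ ⊗ ℂ⁴ via the reordering isomorphism that groups the two 'Alice' qubits together and the two 'Bob' qubits together, does not belong to S_1: it is not separable across the (A₁A₂):(B₁B₂) cut, i.e. it admits no decomposition into pure product states. -/

import Mathlib

open Matrix BigOperators
open scoped ComplexOrder

/-- The `n × n` matrix `M_ψ` associated to a vector `ψ ∈ ℂ^α ⊗ ℂ^β`,
with entries `(M_ψ)_{ij} = ⟨e_i ⊗ e_j, ψ⟩ = ψ (i, j)`. -/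
def matOfVec {α β : Type*} (ψ : α × β → ℂ) : Matrix α β ℂ :=
  Matrix.of fun i j => ψ (i, j)

/-- The Schmidt rank of a bipartite vector is the rank of its associated matrix. -/
noncomputable def schmidtRank {α β : Type*} [Fintype β] (ψ : α × β → ℂ) : ℕ :=
  (matOfVec ψ).rank

/-- `ψ` is a unit vector. -/
def IsUnitVec {γ : Type*} [Fintype γ] (ψ : γ → ℂ) : Prop :=
  ∑ x, Complex.normSq (ψ x) = 1

/-- The outer product `|ψ⟩⟨ψ|`. -/
def outer {γ : Type*} (ψ : γ → ℂ) : Matrix γ γ ℂ :=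
  Matrix.of fun x y => ψ x * star (ψ y)

/-- `ρ ∈ S_k`: `ρ` admits a decomposition `ρ = ∑ i, p i • |ψ i⟩⟨ψ i|` with `p i ≥ 0`,
`∑ i, p i = 1`, each `ψ i` a unit vector of Schmidt rank at most `k`. -/
def InSchmidtClass {α : Type*} [Fintype α] (k : ℕ)
    (ρ : Matrix (α × α) (α × α) ℂ) : Prop :=
  ∃ (m : ℕ) (p : Fin m → ℝ) (ψ : Fin m → α × α → ℂ),
    (∀ i, 0 ≤ p i) ∧ (∑ i, p i) = 1 ∧
    (∀ i, IsUnitVec (ψ i)) ∧ (∀ i, schmidtRank (ψ i) ≤ k) ∧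
    ρ = ∑ i, (p i : ℂ) • outer (ψ i)

/-- The map `1 ⊗ Λ`, applying `Λ` to each block of a matrix indexed by `γ × Fin n`. -/
def blockMap {γ : Type*} {n m : ℕ}
    (Λ : Matrix (Fin n) (Fin n) ℂ → Matrix (Fin m) (Fin m) ℂ)
    (X : Matrix (γ × Fin n) (γ × Fin n) ℂ) : Matrix (γ × Fin m) (γ × Fin m) ℂ :=
  Matrix.of fun a b => Λ (Matrix.of fun s t => X (a.1, s) (b.1, t)) a.2 b.2

/-- `Λ` is Hermiticity-preserving: `Λ(X†) = Λ(X)†`. -/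
def HermPreserving {n m : ℕ}
    (Λ : Matrix (Fin n) (Fin n) ℂ → Matrix (Fin m) (Fin m) ℂ) : Prop :=
  ∀ X, Λ Xᴴ = (Λ X)ᴴ

/-- `Λ` is `k`-positive: `(1 ⊗ Λ)(|ψ⟩⟨ψ|)` is positive semidefinite for every
unit vector `ψ ∈ ℂ^N ⊗ ℂ^N` of Schmidt rank at most `k`. -/
def kPositive {N : ℕ} (k : ℕ)
    (Λ : Matrix (Fin N) (Fin N) ℂ → Matrix (Fin N) (Fin N) ℂ) : Prop :=
  ∀ ψ : Fin N × Fin N → ℂ, IsUnitVec ψ → schmidtRank ψ ≤ k →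
    (blockMap Λ (outer ψ)).PosSemidef

/-- The maximally entangled state `Ψ⁺ = (1/√N) ∑ i, e i ⊗ e i`. -/
noncomputable def psiPlus (N : ℕ) : Fin N × Fin N → ℂ :=
  fun x => if x.1 = x.2 then ((Real.sqrt N : ℂ))⁻¹ else 0

/-- The isotropic state `ρ_F = F |Ψ⁺⟩⟨Ψ⁺| + ((1−F)/(N²−1)) (I − |Ψ⁺⟩⟨Ψ⁺|)`. -/
noncomputable def rhoF (N : ℕ) (F : ℝ) : Matrix (Fin N × Fin N) (Fin N × Fin N) ℂ :=
  (F : ℂ) • outer (psiPlus N) +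
    (((1 - F) / ((N : ℝ) ^ 2 - 1) : ℝ) : ℂ) •
      ((1 : Matrix (Fin N × Fin N) (Fin N × Fin N) ℂ) - outer (psiPlus N))

/-- The Kronecker product `ρ ⊗ σ` of bipartite states, with indices regrouped via the
reordering isomorphism `(ℂ^α ⊗ ℂ^α) ⊗ (ℂ^β ⊗ ℂ^β) ≅ (ℂ^α ⊗ ℂ^β) ⊗ (ℂ^α ⊗ ℂ^β)` so that the
first factor collects the two Alice systems and the second the two Bob systems. -/
def reorderedKron {α β : Type*}
    (ρ : Matrix (α × α) (α × α) ℂ) (σ : Matrix (β × β) (β × β) ℂ) :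
    Matrix ((α × β) × (α × β)) ((α × β) × (α × β)) ℂ :=
  Matrix.of fun x y =>
    ρ (x.1.1, x.2.1) (y.1.1, y.2.1) * σ (x.1.2, x.2.2) (y.1.2, y.2.2)

/-- For `N = 2` and `F = 1/√2`, the two-copy state `ρ_F ⊗ ρ_F`, regrouped
across the `(A₁A₂):(B₁B₂)` cut, is not separable: it does not belong to `S_1`. -/
abbrev P2 := Fin 2 × Fin 2
abbrev G4 := P2 × P2

lemma hs2 : (Real.sqrt 2 : ℂ) * (Real.sqrt 2 : ℂ) = 2 := by
  have : Real.sqrt 2 * Real.sqrt 2 = 2 := Real.mul_self_sqrt (by norm_num)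
  exact_mod_cast this

noncomputable def phi4 : G4 → ℂ := fun x => if x.1 = x.2 then (1 / 2 : ℂ) else 0

noncomputable def qform (ρ : Matrix G4 G4 ℂ) : ℂ :=
  ∑ x : G4, ∑ y : G4, phi4 x * ρ x y * phi4 y

noncomputable def q2 (ρ : Matrix P2 P2 ℂ) : ℂ :=
  ∑ x : P2, ∑ y : P2, psiPlus 2 x * ρ x y * psiPlus 2 y

def regroup : ((P2 × P2) × (P2 × P2)) ≃ (G4 × G4) where
  toFun z := (((z.1.1.1, z.2.1.1), (z.1.1.2, z.2.1.2)),
              ((z.1.2.1, z.2.2.1), (z.1.2.2, z.2.2.2)))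
  invFun x := (((x.1.1.1, x.1.2.1), (x.2.1.1, x.2.2.1)),
               ((x.1.1.2, x.1.2.2), (x.2.1.2, x.2.2.2)))
  left_inv _ := rfl
  right_inv _ := rfl


lemma qform_kron (ρ σ : Matrix P2 P2 ℂ) :
    qform (reorderedKron ρ σ) = q2 ρ * q2 σ := by
  have ha : ((Real.sqrt 2 : ℂ))⁻¹ * ((Real.sqrt 2 : ℂ))⁻¹ = 1 / 2 := by
    rw [← mul_inv, hs2]; norm_num
  have hA : q2 ρ = ∑ p : P2 × P2, psiPlus 2 p.1 * ρ p.1 p.2 * psiPlus 2 p.2 := by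
    rw [Fintype.sum_prod_type]; rfl
  have hB : q2 σ = ∑ p : P2 × P2, psiPlus 2 p.1 * σ p.1 p.2 * psiPlus 2 p.2 := by
    rw [Fintype.sum_prod_type]; rfl
  have hL : qform (reorderedKron ρ σ) =
      ∑ z : G4 × G4, phi4 z.1 * reorderedKron ρ σ z.1 z.2 * phi4 z.2 := by
    rw [Fintype.sum_prod_type]; rfl
  rw [hA, hB, Finset.sum_mul_sum, ← Finset.sum_product', hL]
  refine (Fintype.sum_equiv regroup _ _ ?_).symm
  rintro ⟨⟨⟨a1, a2⟩, ⟨b1, b2⟩⟩, ⟨⟨c1, c2⟩, ⟨d1, d2⟩⟩⟩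
  show psiPlus 2 (a1, a2) * ρ (a1, a2) (b1, b2) * psiPlus 2 (b1, b2) *
      (psiPlus 2 (c1, c2) * σ (c1, c2) (d1, d2) * psiPlus 2 (d1, d2)) =
    phi4 ((a1, c1), (a2, c2)) * (ρ (a1, a2) (b1, b2) * σ (c1, c2) (d1, d2)) *
      phi4 ((b1, d1), (b2, d2))
  simp only [psiPlus, phi4, Prod.mk.injEq, Nat.cast_ofNat]
  by_cases h1 : a1 = a2 <;> by_cases h2 : c1 = c2 <;>
    by_cases h3 : b1 = b2 <;> by_cases h4 : d1 = d2 <;>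
    simp only [h1, h2, h3, h4, if_true, if_false, and_true, and_false, true_and, false_and,
      and_self, ite_true, ite_false, zero_mul, mul_zero] <;>
    first
      | ring1
      | linear_combination ((ρ (a2, a2) (b2, b2) * σ (c2, c2) (d2, d2)) *
          (1 / 2 + ((Real.sqrt 2 : ℂ))⁻¹ * ((Real.sqrt 2 : ℂ))⁻¹)) * ha

lemma q2_rhoF : q2 (rhoF 2 ((Real.sqrt 2))⁻¹) = ((Real.sqrt 2 : ℂ))⁻¹ := by
  have ha : ((Real.sqrt 2 : ℂ))⁻¹ * ((Real.sqrt 2 : ℂ))⁻¹ = 1 / 2 := by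
    rw [← mul_inv, hs2]; norm_num
  simp only [q2, rhoF, outer, psiPlus, Matrix.add_apply, Matrix.smul_apply, Matrix.sub_apply,
    Matrix.one_apply, Matrix.of_apply, smul_eq_mul, Fintype.sum_prod_type, Fin.sum_univ_two,
    Nat.cast_ofNat, Prod.mk.injEq]
  norm_num
  ring_nf
  linear_combination ((16/3) * ((Real.sqrt 2 : ℂ))⁻¹^3 - (4/3) * ((Real.sqrt 2 : ℂ))⁻¹^2 + 2 * ((Real.sqrt 2 : ℂ))⁻¹) * ha

lemma rank_le_one_factor {α β : Type*} [Fintype α] [Fintype β] [DecidableEq β]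
    (A : Matrix α β ℂ) (h : A.rank ≤ 1) :
    ∃ u : α → ℂ, ∃ v : β → ℂ, ∀ a b, A a b = u a * v b := by
  by_cases hA : A = 0
  · exact ⟨0, 0, fun a b => by simp [hA]⟩
  · obtain ⟨a0, b0, hab⟩ : ∃ a0 b0, A a0 b0 ≠ 0 := by
      by_contra hc
      push_neg at hc
      exact hA (by ext a b; simp [hc])
    set W := LinearMap.range A.mulVecLin with hW
    have hcol : ∀ b : β, A.mulVecLin (Pi.single b 1) = fun a => A a b := by
      intro b
      funext a
      simp [Matrix.mulVecLin_apply, Matrix.mulVec, dotProduct, Pi.single_apply]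
    have hv0 : (fun a => A a b0) ≠ 0 := by
      intro hz
      exact hab (by have := congrFun hz a0; simpa using this)
    have hmem : ∀ b, (fun a => A a b) ∈ W := fun b => ⟨Pi.single b 1, hcol b⟩
    have hle : Submodule.span ℂ {(fun a => A a b0)} ≤ W := by
      rw [Submodule.span_le, Set.singleton_subset_iff]; exact hmem b0
    have hfr : Module.finrank ℂ W ≤
        Module.finrank ℂ (Submodule.span ℂ {(fun a => A a b0)}) := by
      rw [finrank_span_singleton hv0]
      exact h
    have heq : Submodule.span ℂ {(fun a => A a b0)} = W :=
      Submodule.eq_of_le_of_finrank_le hle hfr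
    have hc : ∀ b, ∃ c : ℂ, (fun a => A a b) = c • (fun a => A a b0) := by
      intro b
      have hb := hmem b
      rw [← heq, Submodule.mem_span_singleton] at hb
      obtain ⟨c, hc⟩ := hb
      exact ⟨c, hc.symm⟩
    choose c hc using hc
    refine ⟨fun a => A a b0, c, fun a b => ?_⟩
    have := congrFun (hc b) a
    simp only [Pi.smul_apply, smul_eq_mul] at this
    rw [this]; ring

noncomputable def qformL : Matrix G4 G4 ℂ →ₗ[ℂ] ℂ where
  toFun := qform
  map_add' M N := by
    simp [qform, mul_add, add_mul, Finset.sum_add_distrib]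
  map_smul' c M := by
    simp only [qform, Matrix.smul_apply, smul_eq_mul, RingHom.id_apply, Finset.mul_sum]
    refine Finset.sum_congr rfl fun x _ => Finset.sum_congr rfl fun y _ => by ring

lemma qform_outer (ψ : G4 → ℂ) :
    qform (outer ψ) = (Complex.normSq (∑ x : G4, phi4 x * ψ x) : ℂ) := by
  have hphi : ∀ y : G4, phi4 y * (starRingEnd ℂ) (ψ y) =
      (starRingEnd ℂ) (phi4 y * ψ y) := by
    intro y
    rw [RingHom.map_mul]
    congr 1
    simp only [phi4]
    split <;> simp [Complex.conj_ofNat]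
  calc qform (outer ψ)
      = (∑ x : G4, phi4 x * ψ x) * ∑ y : G4, phi4 y * (starRingEnd ℂ) (ψ y) := by
        rw [Finset.sum_mul_sum]
        refine Finset.sum_congr rfl fun x _ => Finset.sum_congr rfl fun y _ => ?_
        simp only [outer, Matrix.of_apply, Complex.star_def]
        ring
    _ = (Complex.normSq (∑ x : G4, phi4 x * ψ x) : ℂ) := by
        rw [Finset.sum_congr rfl fun y _ => hphi y, ← map_sum, Complex.mul_conj]

lemma s_bound (ψ : G4 → ℂ) (hunit : ∑ x, Complex.normSq (ψ x) = 1)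
    (u v : P2 → ℂ) (hf : ∀ a b, ψ (a, b) = u a * v b) :
    Complex.normSq (∑ x : G4, phi4 x * ψ x) ≤ 1 / 4 := by
  have hserie : ∑ x : G4, phi4 x * ψ x = (1 / 2 : ℂ) * ∑ a : P2, u a * v a := by
    rw [Fintype.sum_prod_type]
    have : ∀ a : P2, ∑ b : P2, phi4 (a, b) * ψ (a, b)
        = (1 / 2 : ℂ) * (u a * v a) := by
      intro a
      rw [Finset.sum_eq_single a]
      · rw [hf]; simp [phi4]
      · intro b _ hb
        simp [phi4, Ne.symm hb]
      · simp
    rw [Finset.sum_congr rfl fun a _ => this a, ← Finset.mul_sum]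
  have hnorm : (∑ a : P2, Complex.normSq (u a)) * (∑ a : P2, Complex.normSq (v a)) = 1 := by
    have h0 : ∑ x : G4, Complex.normSq (ψ x) = ∑ a : P2, ∑ b : P2, Complex.normSq (ψ (a, b)) :=
      Fintype.sum_prod_type _
    rw [← hunit, h0, Finset.sum_mul_sum]
    refine (Finset.sum_congr rfl fun a _ => Finset.sum_congr rfl fun b _ => ?_).symm
    rw [hf, Complex.normSq_mul]
  have h1 : ‖(∑ a : P2, u a * v a)‖
      ≤ ∑ a : P2, ‖(u a)‖ * ‖(v a)‖ := by
    refine (norm_sum_le _ _).trans_eq ?_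
    exact Finset.sum_congr rfl fun a _ => by
      rw [norm_mul]
  have h2 : (∑ a : P2, ‖(u a)‖ * ‖(v a)‖) ^ 2
      ≤ (∑ a : P2, ‖(u a)‖ ^ 2) * (∑ a : P2, ‖(v a)‖ ^ 2) :=
    Finset.sum_mul_sq_le_sq_mul_sq _ _ _
  have h3 : Complex.normSq (∑ a : P2, u a * v a) ≤ 1 := by
    have habs : Complex.normSq (∑ a : P2, u a * v a)
        = ‖(∑ a : P2, u a * v a)‖ ^ 2 := (Complex.sq_norm _).symm
    rw [habs]
    calc ‖(∑ a : P2, u a * v a)‖ ^ 2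
        ≤ (∑ a : P2, ‖(u a)‖ * ‖(v a)‖) ^ 2 :=
          pow_le_pow_left₀ (norm_nonneg _) h1 2
      _ ≤ (∑ a : P2, ‖(u a)‖ ^ 2) * (∑ a : P2, ‖(v a)‖ ^ 2) := h2
      _ = 1 := by
          rw [Finset.sum_congr rfl fun a _ => Complex.sq_norm (u a),
            Finset.sum_congr rfl fun a _ => Complex.sq_norm (v a), hnorm]
  rw [hserie, Complex.normSq_mul]
  have : Complex.normSq (1 / 2 : ℂ) = 1 / 4 := by
    simp [Complex.normSq]; norm_num
  rw [this]
  linarith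

theorem rhoF_two_copies_not_separable :
    ¬ InSchmidtClass 1
      (reorderedKron (rhoF 2 ((Real.sqrt 2))⁻¹) (rhoF 2 ((Real.sqrt 2))⁻¹)) := by
  rintro ⟨m, p, ψ, hp0, hp1, hunit, hrank, heq⟩
  have ha : ((Real.sqrt 2 : ℂ))⁻¹ * ((Real.sqrt 2 : ℂ))⁻¹ = 1 / 2 := by
    rw [← mul_inv, hs2]; norm_num
  -- value of the witness functional on the target state
  have hval : qform (reorderedKron (rhoF 2 ((Real.sqrt 2))⁻¹) (rhoF 2 ((Real.sqrt 2))⁻¹))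
      = 1 / 2 := by
    rw [qform_kron, q2_rhoF, ha]
  -- value on the separable decomposition
  have hdec : qform (reorderedKron (rhoF 2 ((Real.sqrt 2))⁻¹) (rhoF 2 ((Real.sqrt 2))⁻¹))
      = ∑ i, ((p i : ℂ)) * (Complex.normSq (∑ x : G4, phi4 x * ψ i x) : ℂ) := by
    rw [heq]
    have : qform (∑ i, (p i : ℂ) • outer (ψ i))
        = ∑ i, (p i : ℂ) * qform (outer (ψ i)) := by
      have := map_sum qformL (fun i => (p i : ℂ) • outer (ψ i)) Finset.univ
      rw [show qform (∑ i, (p i : ℂ) • outer (ψ i))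
        = qformL (∑ i, (p i : ℂ) • outer (ψ i)) from rfl, this]
      exact Finset.sum_congr rfl fun i _ => by rw [LinearMap.map_smul, smul_eq_mul]; rfl
    rw [this]
    exact Finset.sum_congr rfl fun i _ => by rw [qform_outer]
  -- take real parts
  have hre : (1 / 2 : ℝ) = ∑ i, p i * Complex.normSq (∑ x : G4, phi4 x * ψ i x) := by
    have h := hval.symm.trans hdec
    rw [show (1 / 2 : ℂ) = ((1 / 2 : ℝ) : ℂ) by norm_num] at h
    exact_mod_cast h
  -- bound each term
  have hbound : ∀ i, Complex.normSq (∑ x : G4, phi4 x * ψ i x) ≤ 1 / 4 := by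
    intro i
    obtain ⟨u, v, huv⟩ := rank_le_one_factor (matOfVec (ψ i)) (hrank i)
    exact s_bound (ψ i) (hunit i) u v fun a b => huv a b
  have hsum : ∑ i, p i * Complex.normSq (∑ x : G4, phi4 x * ψ i x) ≤ 1 / 4 := by
    calc ∑ i, p i * Complex.normSq (∑ x : G4, phi4 x * ψ i x)
        ≤ ∑ i, p i * (1 / 4) := by
          exact Finset.sum_le_sum fun i _ =>
            mul_le_mul_of_nonneg_left (hbound i) (hp0 i)
      _ = 1 / 4 := by rw [← Finset.sum_mul, hp1, one_mul]
  linarith [hre ▸ hsum]
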